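/- Let J be a nilpotent endomorphism of a finite-dimensional vector space V, and let f₁ > ⋯ > f_s > 0 be the distinct Jordan block sizes of J, with multiplicities m₁, …, m_s. Define U_i = (ker J^{f_i} + im J)/(ker J^{f_i−1} + im J) and W_i = (ker J ∩ im J^{f_i−1})/(ker J ∩ im J^{f_i}). Then dim U_i = dim W_i = m_i for each i = 1, …, s. -/

import Mathlib

open Module LinearMap

private lemma aux_map_finrank {K V : Type*} [Field K] [AddCommGroup V] [Module K V]
    [FiniteDimensional K V] (f : V →ₗ[K] V) (p : Submodule K V) :
    finrank K (p.map f) + finrank K (ker f ⊓ p : Submodule K V) = finrank K p := by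
  have h := LinearMap.finrank_range_add_finrank_ker (f.domRestrict p)
  rw [LinearMap.range_domRestrict, LinearMap.ker_domRestrict] at h
  have h2 : finrank K (Submodule.comap p.subtype (ker f)) =
      finrank K (ker f ⊓ p : Submodule K V) := by
    rw [← Submodule.finrank_map_subtype_eq p, Submodule.map_comap_subtype, inf_comm]
  rw [h2] at h
  exact h

private lemma aux_inf_range {K V : Type*} [Field K] [AddCommGroup V] [Module K V]
    (J : V →ₗ[K] V) (j k : ℕ) :
    ker (J ^ j) ⊓ range (J ^ k) = Submodule.map (J ^ k) (ker (J ^ (j + k))) := by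
  have : ker (J ^ (j + k)) = Submodule.comap (J ^ k) (ker (J ^ j)) := by
    rw [pow_add, ← LinearMap.ker_comp]; rfl
  rw [this, Submodule.map_comap_eq, inf_comm]

/-- for `J` nilpotent with distinct Jordan block sizes `f₁ > ⋯ > f_s > 0`
and multiplicities `m₁, …, m_s` (encoded via `rank J^k = ∑ᵢ mᵢ·(fᵢ − k)`), the
subquotients `U_i = (ker J^{f_i} + im J)/(ker J^{f_i−1} + im J)` and
`W_i = (ker J ∩ im J^{f_i−1})/(ker J ∩ im J^{f_i})` both have dimension `m_i`. -/
theorem dim_Ui_eq_dim_Wi (K V : Type*) [Field K] [AddCommGroup V] [Module K V]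
    [FiniteDimensional K V] (J : V →ₗ[K] V) (s : ℕ) (f m : Fin s → ℕ)
    (hf : StrictAnti f) (hfpos : ∀ i, 0 < f i) (hmpos : ∀ i, 0 < m i)
    (hrank : ∀ k : ℕ, finrank K (LinearMap.range (J ^ k)) = ∑ i, m i * (f i - k)) :
    ∀ i : Fin s,
      (finrank K (ker (J ^ f i) ⊔ range J : Submodule K V) =
        finrank K (ker (J ^ (f i - 1)) ⊔ range J : Submodule K V) + m i) ∧
      (finrank K (ker J ⊓ range (J ^ (f i - 1)) : Submodule K V) =
        finrank K (ker J ⊓ range (J ^ f i) : Submodule K V) + m i) := by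
  intro i
  set k := f i with hk
  have hk1 : 1 ≤ k := hfpos i
  -- rank and kernel-dimension abbreviations
  set n := finrank K V with hn
  have hkerrank : ∀ j : ℕ, finrank K (ker (J ^ j) : Submodule K V) +
      finrank K (range (J ^ j) : Submodule K V) = n := fun j => by
    rw [add_comm]; exact LinearMap.finrank_range_add_finrank_ker (J ^ j)
  -- dimension of ker(J^j) ⊓ range(J): equals dim ker J^{j+1} - dim ker J
  have hinf1 : ∀ j : ℕ, finrank K (ker (J ^ j) ⊓ range J : Submodule K V) +
      finrank K (ker J : Submodule K V) = finrank K (ker (J ^ (j + 1)) : Submodule K V) := by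
    intro j
    have he : ker (J ^ j) ⊓ range J = Submodule.map J (ker (J ^ (j + 1))) := by
      have := aux_inf_range J j 1
      simpa [pow_one] using this
    have h := aux_map_finrank J (ker (J ^ (j + 1)))
    have hle : ker J ⊓ ker (J ^ (j + 1)) = ker J := by
      rw [inf_eq_left]
      intro x hx
      simp only [LinearMap.mem_ker] at hx ⊢
      rw [pow_succ, Module.End.mul_apply, hx, map_zero]
    rw [hle] at h
    rw [he, h]
  -- dimension of ker(J) ⊓ range(J^j): equals dim ker J^{j+1} - dim ker J^j
  have hinf2 : ∀ j : ℕ, finrank K (ker J ⊓ range (J ^ j) : Submodule K V) +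
      finrank K (ker (J ^ j) : Submodule K V) =
      finrank K (ker (J ^ (j + 1)) : Submodule K V) := by
    intro j
    have he : ker J ⊓ range (J ^ j) = Submodule.map (J ^ j) (ker (J ^ (1 + j))) := by
      have := aux_inf_range J 1 j
      simpa [pow_one] using this
    have h := aux_map_finrank (J ^ j) (ker (J ^ (1 + j)))
    have hle : ker (J ^ j) ⊓ ker (J ^ (1 + j)) = ker (J ^ j) := by
      rw [inf_eq_left]
      intro x hx
      simp only [LinearMap.mem_ker] at hx ⊢
      rw [add_comm, pow_succ', Module.End.mul_apply, hx, map_zero]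
    rw [hle] at h
    rw [add_comm 1 j] at he h
    rw [he]
    exact h
  -- sup-inf dimension formula
  have hsup : ∀ j : ℕ, finrank K (ker (J ^ j) ⊔ range J : Submodule K V) +
      finrank K (ker (J ^ j) ⊓ range J : Submodule K V) =
      finrank K (ker (J ^ j) : Submodule K V) + finrank K (range J : Submodule K V) :=
    fun j => Submodule.finrank_sup_add_finrank_inf_eq _ _
  -- rank differences via the combinatorial hypothesis
  have hrankdiff : ∀ j : ℕ, 1 ≤ j → finrank K (range (J ^ (j - 1)) : Submodule K V) =
      finrank K (range (J ^ j) : Submodule K V) +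
      ∑ l ∈ Finset.univ.filter (fun l => j ≤ f l), m l := by
    intro j hj
    rw [hrank, hrank, ← Finset.sum_filter_add_sum_filter_not Finset.univ (fun l => j ≤ f l)
      (fun l => m l * (f l - j))]
    have h1 : ∑ l ∈ Finset.univ.filter (fun l => j ≤ f l), m l * (f l - (j - 1)) =
        (∑ l ∈ Finset.univ.filter (fun l => j ≤ f l), m l * (f l - j)) +
        ∑ l ∈ Finset.univ.filter (fun l => j ≤ f l), m l := by
      rw [← Finset.sum_add_distrib]
      apply Finset.sum_congr rfl
      intro l hl
      simp only [Finset.mem_filter] at hl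
      have : f l - (j - 1) = (f l - j) + 1 := by omega
      rw [this, Nat.mul_add, mul_one]
    have h2 : ∑ l ∈ Finset.univ.filter (fun l => ¬ j ≤ f l), m l * (f l - (j - 1)) =
        ∑ l ∈ Finset.univ.filter (fun l => ¬ j ≤ f l), m l * (f l - j) := by
      apply Finset.sum_congr rfl
      intro l hl
      simp only [Finset.mem_filter] at hl
      have : f l - (j - 1) = f l - j := by omega
      rw [this]
    rw [← Finset.sum_filter_add_sum_filter_not Finset.univ (fun l => j ≤ f l)
      (fun l => m l * (f l - (j - 1))), h1, h2]
    ring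
  -- the two filtered sums differ by m i
  have hsums : ∑ l ∈ Finset.univ.filter (fun l => k ≤ f l), m l =
      (∑ l ∈ Finset.univ.filter (fun l => k + 1 ≤ f l), m l) + m i := by
    have e1 : Finset.univ.filter (fun l => k ≤ f l) = Finset.Iic i := by
      ext l
      simp only [Finset.mem_filter, Finset.mem_univ, true_and, Finset.mem_Iic]
      exact ⟨fun h => hf.le_iff_ge.mp h, fun h => hf.le_iff_ge.mpr h⟩
    have e2 : Finset.univ.filter (fun l => k + 1 ≤ f l) = Finset.Iio i := by
      ext l
      simp only [Finset.mem_filter, Finset.mem_univ, true_and, Finset.mem_Iio]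
      constructor
      · intro h; exact hf.lt_iff_gt.mp (by omega)
      · intro h; have := hf.lt_iff_gt.mpr h; omega
    rw [e1, e2, ← Finset.Iio_insert, Finset.sum_insert (by simp), add_comm]
  -- assemble everything with omega
  have hkd0 := hkerrank (k - 1)
  have hkd1 := hkerrank k
  have hkd2 := hkerrank (k + 1)
  have hi10 := hinf1 (k - 1)
  have hi11 := hinf1 k
  have hi20 := hinf2 (k - 1)
  have hi21 := hinf2 k
  have hs0 := hsup (k - 1)
  have hs1 := hsup k
  have hr1 := hrankdiff k hk1
  have hr2 := hrankdiff (k + 1) (by omega)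
  have hkm1 : k - 1 + 1 = k := by omega
  have hkp1 : k + 1 - 1 = k := by omega
  rw [hkm1] at hi10 hi20
  rw [hkp1] at hr2
  have hker1 := hkerrank 1
  have hpow1 : J ^ 1 = J := pow_one J
  rw [hpow1] at hker1
  rw [hsums] at hr1
  constructor
  · omega
  · omega
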